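/- arXiv:1008.0276 — 2 statements merged into one kernel-verified Lean document; each statement's English description precedes it below -/
import Mathlib

section
/- Let X be a real random variable such that P(|X| > x) · x^α → c for some constants c > 0 and 0 < α ≤ 2 as x → ∞ (Paretian tail of index α). Define Y = sgn(X)|X|^{α/2}. Then lim_{y→∞} y^2 P(|Y| > y) / E[Y^2 · 1{|Y| ≤ y}] = 0. -/
open MeasureTheory Filter

theorem dan_ratio_condition_of_paretian_tail
    {Ω : Type*} [MeasurableSpace Ω] (P : Measure Ω) [IsProbabilityMeasure P]
    (X : Ω → ℝ) (hX : Measurable X)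
    (c α : ℝ) (hc : 0 < c) (hα0 : 0 < α) (hα2 : α ≤ 2)
    (htail : Tendsto (fun x => (P {ω | |X ω| > x}).toReal * x ^ α) atTop (nhds c))
    (Y : Ω → ℝ)
    (hY : ∀ ω, Y ω = Real.sign (X ω) * |X ω| ^ (α / 2)) :
    Tendsto (fun y =>
        y ^ 2 * (P {ω | |Y ω| > y}).toReal / ∫ ω in {ω | |Y ω| ≤ y}, (Y ω) ^ 2 ∂P)
      atTop (nhds 0) := by
  set Z : Ω → ℝ := fun ω => |X ω| ^ α with hZdef
  have hZm : Measurable Z := (Real.continuous_rpow_const hα0.le).measurable.comp hX.abs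
  have hZ0 : ∀ ω, 0 ≤ Z ω := fun ω => Real.rpow_nonneg (abs_nonneg _) α
  -- Y² = Z pointwise
  have hYsq : ∀ ω, Y ω ^ 2 = Z ω := by
    intro ω
    have hr : (|X ω| ^ (α / 2)) ^ 2 = Z ω := by
      rw [hZdef, ← Real.rpow_natCast (|X ω| ^ (α / 2)) 2, ← Real.rpow_mul (abs_nonneg _)]
      norm_num
    rw [hY ω, mul_pow]
    rcases lt_trichotomy (X ω) 0 with h | h | h
    · rw [Real.sign_of_neg h, hr]; norm_num
    · simp [hZdef, h, Real.sign_zero, Real.zero_rpow hα0.ne']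
    · rw [Real.sign_of_pos h, hr]; norm_num
  -- tail behavior of Z
  have hq : Tendsto (fun s => s * (P {ω | Z ω > s}).toReal) atTop (nhds c) := by
    have hcomp := htail.comp (tendsto_rpow_atTop (y := α⁻¹) (by positivity))
    apply hcomp.congr'
    filter_upwards [eventually_gt_atTop (0 : ℝ)] with s hs
    have hset : {ω | |X ω| > s ^ α⁻¹} = {ω | Z ω > s} := by
      ext ω
      simp only [Set.mem_setOf_eq, gt_iff_lt, hZdef]
      exact Real.rpow_inv_lt_iff_of_pos hs.le (abs_nonneg _) hα0
    have hpow : (s ^ α⁻¹) ^ α = s := by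
      rw [← Real.rpow_mul hs.le, inv_mul_cancel₀ hα0.ne', Real.rpow_one]
    show (P {ω | |X ω| > s ^ α⁻¹}).toReal * (s ^ α⁻¹) ^ α
        = s * (P {ω | Z ω > s}).toReal
    rw [hset, hpow, mul_comm]
  obtain ⟨s₀, hs₀⟩ : ∃ s₀ : ℝ, ∀ s ≥ s₀, 1 ≤ s ∧
      c / 2 < s * (P {ω | Z ω > s}).toReal ∧ s * (P {ω | Z ω > s}).toReal < 2 * c := by
    have h1 := hq.eventually (Ioo_mem_nhds (by linarith : c / 2 < c) (by linarith : c < 2 * c))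
    obtain ⟨s₀, hs₀⟩ := eventually_atTop.mp ((eventually_ge_atTop (1 : ℝ)).and h1)
    exact ⟨s₀, fun s hs => ⟨(hs₀ s hs).1, (hs₀ s hs).2.1, (hs₀ s hs).2.2⟩⟩
  set F : ℝ → ℝ := fun T => ∫ ω in {ω | Z ω ≤ T}, Z ω ∂P with hFdef
  have hmsle : ∀ T : ℝ, MeasurableSet {ω | Z ω ≤ T} :=
    fun T => measurableSet_le hZm measurable_const
  have hmslt : ∀ T : ℝ, MeasurableSet {ω | Z ω > T} :=
    fun T => measurableSet_lt measurable_const hZm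
  have hint : ∀ T : ℝ, IntegrableOn Z {ω | Z ω ≤ T} P := by
    intro T
    apply Measure.integrableOn_of_bounded (measure_ne_top P _) hZm.aestronglyMeasurable
      (M := max T 0)
    rw [ae_restrict_iff' (hmsle T)]
    filter_upwards with ω hω
    rw [Real.norm_eq_abs, abs_of_nonneg (hZ0 ω)]
    exact le_max_of_le_left hω
  have hF0 : ∀ T, 0 ≤ F T := fun T => setIntegral_nonneg (hmsle T) fun ω _ => hZ0 ω
  have hFmono : ∀ a b : ℝ, a ≤ b → F a ≤ F b := by
    intro a b hab
    apply setIntegral_mono_set (hint b) (Eventually.of_forall hZ0)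
    exact HasSubset.Subset.eventuallyLE fun ω h => le_trans h hab
  have hkey : ∀ T, s₀ ≤ T → F T + c / 6 ≤ F (6 * T) := by
    intro T hT
    obtain ⟨hT1, hlow, _⟩ := hs₀ T hT
    have hT0 : 0 < T := lt_of_lt_of_le one_pos hT1
    obtain ⟨_, _, hup6⟩ := hs₀ (6 * T) (by linarith)
    set B : Set Ω := {ω | T < Z ω ∧ Z ω ≤ 6 * T} with hBdef
    have hBeq : B = {ω | Z ω > T} \ {ω | Z ω > 6 * T} := by
      ext ω
      simp only [hBdef, Set.mem_setOf_eq, Set.mem_diff, not_lt, gt_iff_lt]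
    have hBm : MeasurableSet B := by
      rw [hBeq]; exact (hmslt T).diff (hmslt (6 * T))
    have hBint : IntegrableOn Z B P := (hint (6 * T)).mono_set fun ω h => h.2
    have hunion : {ω | Z ω ≤ 6 * T} = {ω | Z ω ≤ T} ∪ B := by
      ext ω
      simp only [Set.mem_setOf_eq, Set.mem_union, hBdef]
      constructor
      · intro h
        rcases le_or_gt (Z ω) T with h' | h'
        · exact Or.inl h'
        · exact Or.inr ⟨h', h⟩
      · rintro (h | ⟨_, h⟩)
        · linarith
        · exact h
    have hdisj : Disjoint {ω | Z ω ≤ T} B := by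
      rw [Set.disjoint_left]
      rintro ω h1 ⟨h2, _⟩
      exact absurd h1 (not_le.mpr h2)
    have hsplit : F (6 * T) = F T + ∫ ω in B, Z ω ∂P := by
      simp only [hFdef]
      rw [hunion, setIntegral_union hdisj hBm (hint T) hBint]
    have hsub : {ω | Z ω > 6 * T} ⊆ {ω | Z ω > T} := fun ω h => lt_trans (show T < 6 * T by linarith) h
    have hPB : (P B).toReal
        = (P {ω | Z ω > T}).toReal - (P {ω | Z ω > 6 * T}).toReal := by
      rw [hBeq, measure_diff hsub (hmslt (6 * T)).nullMeasurableSet (measure_ne_top P _),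
        ENNReal.toReal_sub_of_le (measure_mono hsub) (measure_ne_top P _)]
    have hTB : c / 6 ≤ T * (P B).toReal := by
      rw [hPB, mul_sub]
      linarith
    have hB_ge : T * (P B).toReal ≤ ∫ ω in B, Z ω ∂P :=
      setIntegral_ge_of_const_le_real hBm (measure_ne_top P _) (fun ω h => h.1.le) hBint
    linarith
  set m : ℝ := max s₀ 1 with hm
  have hm1 : 1 ≤ m := le_max_right _ _
  have hms : s₀ ≤ m := le_max_left _ _
  have hgrow : ∀ n : ℕ, (n : ℝ) * (c / 6) ≤ F (m * 6 ^ n) := by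
    intro n
    induction n with
    | zero => simpa using hF0 (m * 1)
    | succ k ih =>
      have hpk : (1 : ℝ) ≤ 6 ^ k := one_le_pow₀ (by norm_num)
      have h1 : s₀ ≤ m * 6 ^ k :=
        le_trans hms (le_mul_of_one_le_right (by linarith) hpk)
      have h2 := hkey (m * 6 ^ k) h1
      have h3 : m * 6 ^ (k + 1) = 6 * (m * 6 ^ k) := by ring
      rw [h3]
      push_cast
      linarith
  have hFtop : Tendsto F atTop atTop := by
    rw [tendsto_atTop_atTop]
    intro b
    obtain ⟨n, hn⟩ := exists_nat_ge (b / (c / 6))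
    refine ⟨m * 6 ^ n, fun y hy => ?_⟩
    have h1 : b ≤ (n : ℝ) * (c / 6) := by
      rw [div_le_iff₀ (by linarith : (0 : ℝ) < c / 6)] at hn
      linarith
    exact le_trans h1 (le_trans (hgrow n) (hFmono _ _ hy))
  have hNum : Tendsto (fun y : ℝ => y ^ 2 * (P {ω | Z ω > y ^ 2}).toReal) atTop (nhds c) :=
    hq.comp (tendsto_pow_atTop two_ne_zero)
  have hDen : Tendsto (fun y : ℝ => F (y ^ 2)) atTop atTop :=
    hFtop.comp (tendsto_pow_atTop two_ne_zero)
  have hmain := hNum.div_atTop hDen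
  apply hmain.congr'
  filter_upwards [eventually_ge_atTop (0 : ℝ)] with y hy
  have hiff : ∀ ω, y < |Y ω| ↔ y ^ 2 < Z ω := by
    intro ω
    rw [← hYsq ω, ← sq_abs (Y ω)]
    exact (pow_lt_pow_iff_left₀ hy (abs_nonneg _) two_ne_zero).symm
  have hgt : {ω | |Y ω| > y} = {ω | Z ω > y ^ 2} := by
    ext ω
    simp only [Set.mem_setOf_eq, gt_iff_lt]
    exact hiff ω
  have hle : {ω | |Y ω| ≤ y} = {ω | Z ω ≤ y ^ 2} := by
    ext ω
    simp only [Set.mem_setOf_eq, ← not_lt]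
    exact not_congr (hiff ω)
  show y ^ 2 * (P {ω | Z ω > y ^ 2}).toReal / F (y ^ 2)
      = y ^ 2 * (P {ω | |Y ω| > y}).toReal / ∫ ω in {ω | |Y ω| ≤ y}, Y ω ^ 2 ∂P
  rw [hgt, hle]
  congr 1
  exact integral_congr_ae (Eventually.of_forall fun ω => (hYsq ω).symm)
end

section
/- Let X_1, …, X_n be i.i.d. symmetric random variables with common distribution in the domain of attraction of an α-stable law with α ≤ 1 (so that, as established via Giné–Götze–Mason, E[∑_{i=1}^n |X_i|^{2α} / (∑_{i=1}^n |X_i|^α)^2] = o(1)). Then E[(∑_{i=1}^n X_i / V_{n,α})^2] → 0 as n → ∞, where V_{n,α} = (∑_{i=1}^n |X_i|^α)^{1/α}. -/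
open MeasureTheory Filter Finset

private lemma real_rpow_add_le {a b p : ℝ} (ha : 0 ≤ a) (hb : 0 ≤ b)
    (hp0 : 0 < p) (hp1 : p ≤ 1) : (a + b) ^ p ≤ a ^ p + b ^ p := by
  lift a to NNReal using ha
  lift b to NNReal using hb
  have h := NNReal.rpow_add_le_add_rpow a b hp0.le hp1
  calc ((a : ℝ) + (b : ℝ)) ^ p = (((a + b : NNReal) : ℝ)) ^ p := by push_cast; ring_nf
    _ = (((a + b) ^ p : NNReal) : ℝ) := by rw [NNReal.coe_rpow]
    _ ≤ ((a ^ p + b ^ p : NNReal) : ℝ) := by exact_mod_cast h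
    _ = (a : ℝ) ^ p + (b : ℝ) ^ p := by push_cast [NNReal.coe_rpow]; ring

private lemma sum_rpow_le'' {ι : Type*} (s : Finset ι) (f : ι → ℝ) (hf : ∀ i ∈ s, 0 ≤ f i)
    {p : ℝ} (hp0 : 0 < p) (hp1 : p ≤ 1) :
    (∑ i ∈ s, f i) ^ p ≤ ∑ i ∈ s, f i ^ p := by
  induction s using Finset.cons_induction with
  | empty => simp [Real.zero_rpow hp0.ne']
  | cons a s ha ih =>
    rw [Finset.sum_cons, Finset.sum_cons]
    have h1 : 0 ≤ f a := hf a (Finset.mem_cons_self a s)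
    have h2 : 0 ≤ ∑ i ∈ s, f i := Finset.sum_nonneg fun i hi => hf i (Finset.mem_cons_of_mem hi)
    calc (f a + ∑ i ∈ s, f i) ^ p ≤ f a ^ p + (∑ i ∈ s, f i) ^ p :=
          real_rpow_add_le h1 h2 hp0 hp1
      _ ≤ f a ^ p + ∑ i ∈ s, f i ^ p := by
          have := ih fun i hi => hf i (Finset.mem_cons_of_mem hi)
          linarith

private lemma sq_rpow_eq (a α : ℝ) : (a ^ 2) ^ α = |a| ^ (2 * α) := by
  rw [← sq_abs, ← Real.rpow_natCast |a| 2, ← Real.rpow_mul (abs_nonneg a)]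
  norm_num

private lemma rpow_two_mul_eq (a α : ℝ) : |a| ^ (2 * α) = (|a| ^ α) ^ 2 := by
  rw [mul_comm, Real.rpow_mul (abs_nonneg a)]
  rw [show ((|a| ^ α) ^ (2:ℝ) = (|a| ^ α) ^ (2:ℕ)) from by
    rw [← Real.rpow_natCast (|a| ^ α) 2]; norm_num]

section PtWise

variable {n : ℕ} {α : ℝ}

private lemma key_sum_sq_le (x : Fin n → ℝ) (hα0 : 0 < α) (hα1 : α ≤ 1) :
    (∑ i, x i ^ 2) ^ α ≤ ∑ i, |x i| ^ (2 * α) := by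
  calc (∑ i, x i ^ 2) ^ α ≤ ∑ i, (x i ^ 2) ^ α :=
        sum_rpow_le'' _ _ (fun i _ => sq_nonneg _) hα0 hα1
    _ = ∑ i, |x i| ^ (2 * α) := by simp_rw [sq_rpow_eq]

private lemma key_T_le_W_sq (x : Fin n → ℝ) :
    (∑ i, |x i| ^ (2 * α)) ≤ (∑ i, |x i| ^ α) ^ 2 := by
  simp_rw [rpow_two_mul_eq]
  exact Finset.sum_sq_le_sq_sum_of_nonneg fun i _ => Real.rpow_nonneg (abs_nonneg _) _

private lemma rpow_real_two (x : ℝ) : x ^ (2:ℝ) = x ^ (2:ℕ) := by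
  rw [← Real.rpow_natCast x 2]; norm_num

private lemma key_denom (x : Fin n → ℝ) (hα0 : 0 < α) (hα1 : α ≤ 1) :
    (∑ i, x i ^ 2) ≤ ((∑ i, |x i| ^ α) ^ (1 / α)) ^ 2 := by
  have hQ : (0:ℝ) ≤ ∑ i, x i ^ 2 := Finset.sum_nonneg fun i _ => sq_nonneg _
  have hW : (0:ℝ) ≤ ∑ i, |x i| ^ α :=
    Finset.sum_nonneg fun i _ => Real.rpow_nonneg (abs_nonneg _) _
  have h1 : (∑ i, x i ^ 2) ^ α ≤ (∑ i, |x i| ^ α) ^ (2:ℝ) := by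
    rw [rpow_real_two]
    exact (key_sum_sq_le x hα0 hα1).trans (key_T_le_W_sq x)
  have h2 := Real.rpow_le_rpow (Real.rpow_nonneg hQ α) h1 (by positivity : (0:ℝ) ≤ 1/α)
  rwa [one_div, Real.rpow_rpow_inv hQ hα0.ne', ← Real.rpow_mul hW,
    mul_comm, Real.rpow_mul hW, ← one_div, rpow_real_two] at h2

private lemma coord_zero (x : Fin n → ℝ) (hα0 : 0 < α)
    (hW : (∑ i, |x i| ^ α) = 0) (i : Fin n) : x i = 0 := by
  have h := (Finset.sum_eq_zero_iff_of_nonneg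
    (fun j _ => Real.rpow_nonneg (abs_nonneg _) _)).mp hW i (Finset.mem_univ i)
  exact abs_eq_zero.mp ((Real.rpow_eq_zero (abs_nonneg _) hα0.ne').mp h)

private lemma G_le_R (x : Fin n → ℝ) (hα0 : 0 < α) (hα1 : α ≤ 1) :
    (∑ i, x i ^ 2) / ((∑ i, |x i| ^ α) ^ (1 / α)) ^ 2 ≤
      (∑ i, |x i| ^ (2 * α)) / (∑ i, |x i| ^ α) ^ 2 := by
  set W := ∑ i, |x i| ^ α with hWdef
  set T := ∑ i, |x i| ^ (2 * α) with hTdef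
  set Q := ∑ i, x i ^ 2 with hQdef
  have hT0 : 0 ≤ T := Finset.sum_nonneg fun i _ => Real.rpow_nonneg (abs_nonneg _) _
  have hW0 : 0 ≤ W := Finset.sum_nonneg fun i _ => Real.rpow_nonneg (abs_nonneg _) _
  have hQ0 : 0 ≤ Q := Finset.sum_nonneg fun i _ => sq_nonneg _
  rcases hW0.eq_or_lt with hW | hWpos
  · have hQz : Q = 0 := Finset.sum_eq_zero fun i _ => by
      rw [coord_zero x hα0 hW.symm i]; ring
    rw [hQz, zero_div]
    positivity
  · have hTW : T ≤ W ^ 2 := key_T_le_W_sq x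
    have hW2 : (0:ℝ) < W ^ 2 := by positivity
    have hQT : Q ≤ T ^ (1/α) := by
      have h1 : Q ^ α ≤ T := key_sum_sq_le x hα0 hα1
      have h2 := Real.rpow_le_rpow (Real.rpow_nonneg hQ0 α) h1 (by positivity : (0:ℝ) ≤ 1/α)
      rwa [one_div, Real.rpow_rpow_inv hQ0 hα0.ne', ← one_div] at h2
    have hD : ((W : ℝ) ^ (1/α)) ^ 2 = (W ^ 2) ^ (1/α) := by
      rw [← rpow_real_two ((W:ℝ) ^ (1/α)), ← Real.rpow_mul hW0, mul_comm,
        Real.rpow_mul hW0, rpow_real_two]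
    have hDpos : (0:ℝ) < ((W : ℝ) ^ (1/α)) ^ 2 := by positivity
    have hR1 : T / W ^ 2 ≤ 1 := (div_le_one hW2).mpr hTW
    have hRle : (T / W ^ 2) ^ (1/α) ≤ T / W ^ 2 := by
      rcases (div_nonneg hT0 hW2.le).eq_or_lt with h | h
      · rw [← h, Real.zero_rpow (by positivity : (1:ℝ)/α ≠ 0)]
      · calc (T / W ^ 2) ^ (1/α) ≤ (T / W ^ 2) ^ (1:ℝ) :=
            Real.rpow_le_rpow_of_exponent_ge h hR1 (by
              rw [le_div_iff₀ hα0]; linarith)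
          _ = T / W ^ 2 := Real.rpow_one _
    calc Q / ((W:ℝ) ^ (1/α)) ^ 2 ≤ T ^ (1/α) / ((W:ℝ) ^ (1/α)) ^ 2 := by gcongr
      _ = (T / W ^ 2) ^ (1/α) := by rw [hD, ← Real.div_rpow hT0 hW2.le]
      _ ≤ T / W ^ 2 := hRle

end PtWise

private lemma map_eq_pi {Ω : Type*} [MeasurableSpace Ω] (P : Measure Ω) [IsProbabilityMeasure P]
    (X : ℕ → Ω → ℝ) (hmeas : ∀ i, Measurable (X i))
    (hindep : ProbabilityTheory.iIndepFun X P) (n : ℕ) :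
    P.map (fun ω (i : Fin n) => X i ω) =
      Measure.pi (fun i : Fin n => P.map (X i)) := by
  classical
  have hΦ : Measurable (fun ω (i : Fin n) => X i ω) :=
    measurable_pi_lambda _ fun i => hmeas i
  haveI : ∀ i : Fin n, IsProbabilityMeasure (P.map (X (i:ℕ))) :=
    fun i => Measure.isProbabilityMeasure_map (hmeas i).aemeasurable
  refine (Measure.pi_eq fun s hs => ?_).symm
  set sets : ℕ → Set ℝ := fun j => if h : j < n then s ⟨j, h⟩ else Set.univ with hsets
  have hpre : (fun ω (i : Fin n) => X i ω) ⁻¹' (Set.univ.pi s)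
      = ⋂ j ∈ Finset.range n, X j ⁻¹' sets j := by
    ext ω
    simp only [Set.mem_preimage, Set.mem_pi, Set.mem_univ, forall_true_left,
      Set.mem_iInter, Finset.mem_range]
    constructor
    · intro h j hj
      simp only [hsets, dif_pos hj, Set.mem_preimage]
      exact h ⟨j, hj⟩
    · intro h i
      have := h i.1 i.2
      simpa only [hsets, dif_pos i.2, Set.mem_preimage, Fin.eta] using this
  rw [Measure.map_apply hΦ (MeasurableSet.univ_pi hs), hpre,
    hindep.measure_inter_preimage_eq_mul (Finset.range n)
      (fun j hj => by
        by_cases h : j < n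
        · simpa only [hsets, dif_pos h] using hs ⟨j, h⟩
        · simp only [hsets, dif_neg h]; exact MeasurableSet.univ)]
  rw [← Fin.prod_univ_eq_prod_range (fun j => P (X j ⁻¹' sets j)) n]
  refine Finset.prod_congr rfl fun i _ => ?_
  rw [Measure.map_apply (hmeas i) (hs i)]
  congr 1
  simp only [hsets, dif_pos i.2, Fin.eta]

private lemma cross_zero {n : ℕ} (ν : Fin n → Measure ℝ) [∀ i, IsProbabilityMeasure (ν i)]
    (hsymν : ∀ i, (ν i).map (fun t : ℝ => -t) = ν i)
    {α : ℝ} (i₀ j₀ : Fin n) (hij : i₀ ≠ j₀) :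
    ∫ x : Fin n → ℝ, (x i₀ * x j₀) / ((∑ i, |x i| ^ α) ^ (1/α)) ^ 2 ∂(Measure.pi ν) = 0 := by
  classical
  set g : (Fin n → ℝ) → ℝ :=
    fun x => (x i₀ * x j₀) / ((∑ i, |x i| ^ α) ^ (1/α)) ^ 2 with hgdef
  have hg : Measurable g := by
    rw [hgdef]; fun_prop
  set f : Fin n → ℝ → ℝ := fun i => if i = i₀ then (fun t => -t) else id with hfdef
  have hfm : ∀ i, MeasurePreserving (f i) (ν i) (ν i) := by
    intro i
    by_cases h : i = i₀
    · have hfi : f i = fun t : ℝ => -t := by simp [hfdef, h]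
      rw [hfi]
      exact ⟨measurable_neg, hsymν i⟩
    · have hfi : f i = id := by simp [hfdef, h]
      rw [hfi]
      exact MeasurePreserving.id _
  have hMP : MeasurePreserving (fun (x : Fin n → ℝ) i => f i (x i))
      (Measure.pi ν) (Measure.pi ν) := measurePreserving_pi ν ν hfm
  have hflip : ∀ x : Fin n → ℝ, g (fun i => f i (x i)) = - g x := by
    intro x
    have h1 : f i₀ (x i₀) = - x i₀ := by simp [hfdef]
    have h2 : f j₀ (x j₀) = x j₀ := by simp [hfdef, (Ne.symm hij)]
    have h3 : ∀ i, |f i (x i)| = |x i| := by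
      intro i; by_cases h : i = i₀ <;> simp [hfdef, h]
    simp only [hgdef]
    rw [h1, h2, Finset.sum_congr rfl fun i _ => by rw [h3 i]]
    rw [neg_mul, neg_div]
  have key : ∫ x, g x ∂(Measure.pi ν) = - ∫ x, g x ∂(Measure.pi ν) := by
    conv_lhs => rw [← hMP.map_eq]
    rw [integral_map hMP.measurable.aemeasurable hg.aestronglyMeasurable]
    simp_rw [hflip]
    exact integral_neg _
  linarith

theorem variance_self_normalized_tendsto_zero
    {Ω : Type*} [MeasurableSpace Ω] (P : Measure Ω) [IsProbabilityMeasure P]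
    (X : ℕ → Ω → ℝ) (hmeas : ∀ i, Measurable (X i))
    (hindep : ProbabilityTheory.iIndepFun X P)
    (hident : ∀ i j, Measure.map (X i) P = Measure.map (X j) P)
    (hsym : ∀ i, Measure.map (fun ω => -X i ω) P = Measure.map (X i) P)
    (α : ℝ) (hα0 : 0 < α) (hα1 : α ≤ 1)
    (hGGM : Tendsto (fun n => ∫ ω,
        (∑ i ∈ Finset.range n, |X i ω| ^ (2 * α)) /
          (∑ i ∈ Finset.range n, |X i ω| ^ α) ^ 2 ∂P) atTop (nhds 0)) :
    Tendsto (fun n => ∫ ω,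
        ((∑ i ∈ Finset.range n, X i ω) /
          (∑ i ∈ Finset.range n, |X i ω| ^ α) ^ (1 / α)) ^ 2 ∂P)
      atTop (nhds 0) := by
  classical
  refine squeeze_zero (fun n => integral_nonneg fun ω => sq_nonneg _) (fun n => ?_) hGGM
  set ν : Fin n → Measure ℝ := fun i => P.map (X i) with hν
  haveI : ∀ i : Fin n, IsProbabilityMeasure (ν i) :=
    fun i => Measure.isProbabilityMeasure_map (hmeas i).aemeasurable
  haveI : IsProbabilityMeasure (Measure.pi ν) := by
    constructor
    rw [Measure.pi_univ]
    simp [measure_univ]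
  have hsymν : ∀ i : Fin n, (ν i).map (fun t : ℝ => -t) = ν i := by
    intro i
    rw [hν, Measure.map_map measurable_neg (hmeas i)]
    exact hsym i
  set Φ : Ω → (Fin n → ℝ) := fun ω i => X i ω with hΦdef
  have hΦ : Measurable Φ := measurable_pi_lambda _ fun i => hmeas i
  have hmapΦ : P.map Φ = Measure.pi ν := map_eq_pi P X hmeas hindep n
  set μ := Measure.pi ν with hμ
  set g2 : Fin n → Fin n → (Fin n → ℝ) → ℝ :=
    fun i j x => (x i * x j) / ((∑ k, |x k| ^ α) ^ (1/α)) ^ 2 with hg2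
  have hg2m : ∀ i j, Measurable (g2 i j) := fun i j => by rw [hg2]; fun_prop
  have hbound : ∀ i j x, ‖g2 i j x‖ ≤ 1 := by
    intro i j x
    rw [Real.norm_eq_abs, hg2]
    have hD0 : (0:ℝ) ≤ ((∑ k, |x k| ^ α) ^ (1/α)) ^ 2 := by positivity
    simp only []
    rw [abs_div, abs_of_nonneg hD0]
    apply div_le_one_of_le₀ _ hD0
    have hnum : |x i * x j| ≤ ∑ k, x k ^ 2 := by
      have hi : x i ^ 2 ≤ ∑ k, x k ^ 2 := Finset.single_le_sum (f := fun k => x k ^ 2)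
        (fun k _ => sq_nonneg _) (Finset.mem_univ i)
      have hj : x j ^ 2 ≤ ∑ k, x k ^ 2 := Finset.single_le_sum (f := fun k => x k ^ 2)
        (fun k _ => sq_nonneg _) (Finset.mem_univ j)
      rw [abs_mul]
      nlinarith [sq_nonneg (|x i| - |x j|), sq_abs (x i), sq_abs (x j),
        abs_nonneg (x i), abs_nonneg (x j)]
    exact hnum.trans (key_denom x hα0 hα1)
  have hg2i : ∀ i j, Integrable (g2 i j) μ := fun i j =>
    (integrable_const 1).mono' (hg2m i j).aestronglyMeasurable
      (ae_of_all _ fun x => hbound i j x)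
  set F : (Fin n → ℝ) → ℝ :=
    fun x => ((∑ i, x i) / (∑ i, |x i| ^ α) ^ (1/α)) ^ 2 with hF
  have hFm : Measurable F := by rw [hF]; fun_prop
  have hF_eq : ∀ x, F x = ∑ i, ∑ j, g2 i j x := by
    intro x
    rw [hF]
    simp only []
    rw [div_pow, pow_two (∑ i, x i), Finset.sum_mul_sum]
    simp_rw [hg2, Finset.sum_div]
  set G : (Fin n → ℝ) → ℝ :=
    fun x => (∑ i, x i ^ 2) / ((∑ i, |x i| ^ α) ^ (1/α)) ^ 2 with hG
  set R : (Fin n → ℝ) → ℝ :=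
    fun x => (∑ i, |x i| ^ (2 * α)) / (∑ i, |x i| ^ α) ^ 2 with hR
  have hGm : Measurable G := by rw [hG]; fun_prop
  have hRm : Measurable R := by rw [hR]; fun_prop
  have hGeq : ∀ x, G x = ∑ i, g2 i i x := by
    intro x
    rw [hG]
    simp only [hg2, ← Finset.sum_div]
    congr 1
    exact Finset.sum_congr rfl fun i _ => pow_two _
  have hGi : Integrable G μ := by
    have hGe : G = fun x => ∑ i, g2 i i x := funext hGeq
    rw [hGe]
    exact integrable_finset_sum _ fun i _ => hg2i i i
  have hRb : ∀ x, ‖R x‖ ≤ 1 := by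
    intro x
    rw [Real.norm_eq_abs, hR]
    have hW2 : (0:ℝ) ≤ (∑ i, |x i| ^ α) ^ 2 := sq_nonneg _
    have hT0 : (0:ℝ) ≤ ∑ i, |x i| ^ (2*α) :=
      Finset.sum_nonneg fun i _ => Real.rpow_nonneg (abs_nonneg _) _
    simp only []
    rw [abs_of_nonneg (div_nonneg hT0 hW2)]
    exact div_le_one_of_le₀ (key_T_le_W_sq x) hW2
  have hRi : Integrable R μ :=
    (integrable_const 1).mono' hRm.aestronglyMeasurable (ae_of_all _ hRb)
  have step1 : ∫ x, F x ∂μ = ∫ x, G x ∂μ := by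
    calc ∫ x, F x ∂μ = ∑ i, ∑ j, ∫ x, g2 i j x ∂μ := by
          simp_rw [hF_eq]
          rw [integral_finset_sum _ fun i _ => integrable_finset_sum _ fun j _ => hg2i i j]
          exact Finset.sum_congr rfl fun i _ => integral_finset_sum _ fun j _ => hg2i i j
      _ = ∑ i, ∫ x, g2 i i x ∂μ := by
          refine Finset.sum_congr rfl fun i _ => ?_
          refine Finset.sum_eq_single i (fun j _ hj => ?_)
            (fun h => absurd (Finset.mem_univ i) h)
          rw [hg2, hμ]
          exact cross_zero ν hsymν i j (Ne.symm hj)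
      _ = ∫ x, ∑ i, g2 i i x ∂μ := (integral_finset_sum _ fun i _ => hg2i i i).symm
      _ = ∫ x, G x ∂μ := by simp_rw [← hGeq]
  have step2 : ∫ x, G x ∂μ ≤ ∫ x, R x ∂μ := by
    refine integral_mono hGi hRi fun x => ?_
    rw [hG, hR]
    exact G_le_R x hα0 hα1
  have hAF : (∫ ω, ((∑ i ∈ Finset.range n, X i ω) /
      (∑ i ∈ Finset.range n, |X i ω| ^ α) ^ (1/α)) ^ 2 ∂P) = ∫ x, F x ∂μ := by
    rw [← hmapΦ, integral_map hΦ.aemeasurable hFm.aestronglyMeasurable]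
    refine integral_congr_ae (ae_of_all _ fun ω => ?_)
    simp only [hF, hΦdef]
    rw [Fin.sum_univ_eq_sum_range (fun i => X i ω) n,
      Fin.sum_univ_eq_sum_range (fun i => |X i ω| ^ α) n]
  have hBR : (∫ ω, (∑ i ∈ Finset.range n, |X i ω| ^ (2 * α)) /
      (∑ i ∈ Finset.range n, |X i ω| ^ α) ^ 2 ∂P) = ∫ x, R x ∂μ := by
    rw [← hmapΦ, integral_map hΦ.aemeasurable hRm.aestronglyMeasurable]
    refine integral_congr_ae (ae_of_all _ fun ω => ?_)
    simp only [hR, hΦdef]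
    rw [Fin.sum_univ_eq_sum_range (fun i => |X i ω| ^ (2*α)) n,
      Fin.sum_univ_eq_sum_range (fun i => |X i ω| ^ α) n]
  calc (∫ ω, ((∑ i ∈ Finset.range n, X i ω) /
        (∑ i ∈ Finset.range n, |X i ω| ^ α) ^ (1/α)) ^ 2 ∂P) = ∫ x, F x ∂μ := hAF
    _ = ∫ x, G x ∂μ := step1
    _ ≤ ∫ x, R x ∂μ := step2
    _ = _ := hBR.symm
end
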